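/- Let u_i, v_j ∈ ℝ^d, τ > 0, s : Fin m → Fin m → ℝ, and define the extended InfoNCE loss L_eNCE = -(1/m)·Σ_{i,j} s_{ij}·(log P^V_{ij} + log P^T_{ij}), with P^V_{ij} = exp(⟨u_i,v_j⟩/τ)/Σ_k exp(⟨u_i,v_k⟩/τ) and P^T_{ij} = exp(⟨u_i,v_j⟩/τ)/Σ_k exp(⟨u_k,v_j⟩/τ). Then the gradient of L_eNCE with respect to u_n equals Σ_j W_j v_j where W_j = (s_{n·}·P^V_{nj} + s_{·j}·P^T_{nj} - 2 s_{nj})/(m τ), s_{n·} = Σ_k s_{nk} and s_{·j} = Σ_k s_{kj}. -/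

import Mathlib

open RealInnerProductSpace Finset

set_option maxHeartbeats 2000000 in
theorem gradient_eNCE {m d : ℕ} (hm : 1 ≤ m) (hd : 1 ≤ d)
    (u v : Fin m → EuclideanSpace ℝ (Fin d))
    (s : Fin m → Fin m → ℝ) (τ : ℝ) (hτ : 0 < τ) (n : Fin m) :
    HasGradientAt
      (fun w : EuclideanSpace ℝ (Fin d) =>
        -(1 / (m : ℝ)) * ∑ i, ∑ j, s i j *
          (Real.log (Real.exp (⟪Function.update u n w i, v j⟫ / τ) /
              ∑ k, Real.exp (⟪Function.update u n w i, v k⟫ / τ)) +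
           Real.log (Real.exp (⟪Function.update u n w i, v j⟫ / τ) /
              ∑ k, Real.exp (⟪Function.update u n w k, v j⟫ / τ))))
      (∑ j, (((∑ k, s n k) *
            (Real.exp (⟪u n, v j⟫ / τ) / ∑ k, Real.exp (⟪u n, v k⟫ / τ)) +
          (∑ k, s k j) *
            (Real.exp (⟪u n, v j⟫ / τ) / ∑ k, Real.exp (⟪u k, v j⟫ / τ)) -
          2 * s n j) / (m * τ)) • v j)
      (u n) := by
  classical
  haveI : Nonempty (Fin m) := ⟨⟨0, hm⟩⟩
  have hexppos : ∀ (f : Fin m → ℝ), (0:ℝ) < ∑ k, Real.exp (f k) :=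
    fun f => Finset.sum_pos (fun k _ => Real.exp_pos _) Finset.univ_nonempty
  have hm0 : (m:ℝ) ≠ 0 := Nat.cast_ne_zero.mpr (by omega)
  have hτ0 : τ ≠ 0 := ne_of_gt hτ
  -- function rewriting
  have hfun : (fun w : EuclideanSpace ℝ (Fin d) =>
        -(1 / (m : ℝ)) * ∑ i, ∑ j, s i j *
          (Real.log (Real.exp (⟪Function.update u n w i, v j⟫ / τ) /
              ∑ k, Real.exp (⟪Function.update u n w i, v k⟫ / τ)) +
           Real.log (Real.exp (⟪Function.update u n w i, v j⟫ / τ) /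
              ∑ k, Real.exp (⟪Function.update u n w k, v j⟫ / τ))))
      = (fun w : EuclideanSpace ℝ (Fin d) =>
          (-(1 / (m : ℝ)) * ∑ i ∈ Finset.univ.erase n, ∑ j,
              (s i j * (2 * (⟪u i, v j⟫ / τ))
                - s i j * Real.log (∑ k, Real.exp (⟪u i, v k⟫ / τ))))
          + (-(1 / (m : ℝ)) * ((∑ j, s n j * (2 * (⟪w, v j⟫ / τ)))
              - (∑ j, s n j) * Real.log (∑ k, Real.exp (⟪w, v k⟫ / τ))
              - ∑ j, (∑ i, s i j) * Real.log (Real.exp (⟪w, v j⟫ / τ)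
                  + ∑ k ∈ Finset.univ.erase n, Real.exp (⟪u k, v j⟫ / τ))))) := by
    funext w
    have hupd : ∀ j, (∑ k, Real.exp (⟪Function.update u n w k, v j⟫ / τ))
        = Real.exp (⟪w, v j⟫ / τ)
          + ∑ k ∈ Finset.univ.erase n, Real.exp (⟪u k, v j⟫ / τ) := by
      intro j
      rw [← Finset.add_sum_erase _
        (fun k => Real.exp (⟪Function.update u n w k, v j⟫ / τ)) (Finset.mem_univ n)]
      congr 1
      · rw [Function.update_self]
      · exact Finset.sum_congr rfl fun k hk => by
          rw [Function.update_of_ne (Finset.ne_of_mem_erase hk)]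
    have hlog : ∀ i j, s i j *
          (Real.log (Real.exp (⟪Function.update u n w i, v j⟫ / τ) /
              ∑ k, Real.exp (⟪Function.update u n w i, v k⟫ / τ)) +
           Real.log (Real.exp (⟪Function.update u n w i, v j⟫ / τ) /
              ∑ k, Real.exp (⟪Function.update u n w k, v j⟫ / τ)))
        = s i j * (2 * (⟪Function.update u n w i, v j⟫ / τ))
          - s i j * Real.log (∑ k, Real.exp (⟪Function.update u n w i, v k⟫ / τ))
          - s i j * Real.log (Real.exp (⟪w, v j⟫ / τ)
              + ∑ k ∈ Finset.univ.erase n, Real.exp (⟪u k, v j⟫ / τ)) := by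
      intro i j
      rw [Real.log_div (Real.exp_ne_zero _) (ne_of_gt (hexppos _)),
        Real.log_div (Real.exp_ne_zero _) (ne_of_gt (hexppos _)),
        Real.log_exp, hupd j]
      ring
    rw [Finset.sum_congr rfl (fun i _ => Finset.sum_congr rfl (fun j _ => hlog i j))]
    have step1 : (∑ i, ∑ j,
          (s i j * (2 * (⟪Function.update u n w i, v j⟫ / τ))
            - s i j * Real.log (∑ k, Real.exp (⟪Function.update u n w i, v k⟫ / τ))
            - s i j * Real.log (Real.exp (⟪w, v j⟫ / τ)
                + ∑ k ∈ Finset.univ.erase n, Real.exp (⟪u k, v j⟫ / τ))))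
        = ((∑ j, (s n j * (2 * (⟪w, v j⟫ / τ))
              - s n j * Real.log (∑ k, Real.exp (⟪w, v k⟫ / τ))))
            + ∑ i ∈ Finset.univ.erase n, ∑ j,
              (s i j * (2 * (⟪u i, v j⟫ / τ))
                - s i j * Real.log (∑ k, Real.exp (⟪u i, v k⟫ / τ))))
          - ∑ j, (∑ i, s i j) * Real.log (Real.exp (⟪w, v j⟫ / τ)
              + ∑ k ∈ Finset.univ.erase n, Real.exp (⟪u k, v j⟫ / τ)) := by
      rw [Finset.sum_congr rfl (fun i (_ : i ∈ Finset.univ) => Finset.sum_sub_distrib _ _),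
        Finset.sum_sub_distrib]
      congr 1
      · rw [← Finset.add_sum_erase _ _ (Finset.mem_univ n)]
        congr 1
        · exact Finset.sum_congr rfl fun j _ => by simp only [Function.update_self]
        · exact Finset.sum_congr rfl fun i hi => Finset.sum_congr rfl fun j _ => by
            simp only [Function.update_of_ne (Finset.ne_of_mem_erase hi)]
      · rw [Finset.sum_comm]
        exact Finset.sum_congr rfl fun j _ => (Finset.sum_mul _ _ _).symm
    rw [step1,
      show (∑ j, (s n j * (2 * (⟪w, v j⟫ / τ))
          - s n j * Real.log (∑ k, Real.exp (⟪w, v k⟫ / τ))))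
        = (∑ j, s n j * (2 * (⟪w, v j⟫ / τ)))
          - (∑ j, s n j) * Real.log (∑ k, Real.exp (⟪w, v k⟫ / τ)) from by
        rw [Finset.sum_sub_distrib, Finset.sum_mul]]
    ring
  rw [hfun, hasGradientAt_iff_hasFDerivAt]
  -- base derivatives
  have hA : ∀ j : Fin m, HasFDerivAt (fun w : EuclideanSpace ℝ (Fin d) => ⟪w, v j⟫ / τ)
      (τ⁻¹ • (innerSL ℝ (v j))) (u n) := by
    intro j
    have h := (τ⁻¹ • (innerSL ℝ (v j)) :
      EuclideanSpace ℝ (Fin d) →L[ℝ] ℝ).hasFDerivAt (x := u n)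
    exact h.congr_of_eventuallyEq (Filter.Eventually.of_forall fun w => by
      simp only [ContinuousLinearMap.smul_apply, innerSL_apply_apply, smul_eq_mul,
        real_inner_comm, div_eq_inv_mul])
  have h1 : HasFDerivAt (fun w : EuclideanSpace ℝ (Fin d) =>
        ∑ j, s n j * (2 * (⟪w, v j⟫ / τ)))
      (∑ j, s n j • (2:ℝ) • τ⁻¹ • (innerSL ℝ (v j))) (u n) :=
    HasFDerivAt.fun_sum fun j _ => ((hA j).const_mul (2:ℝ)).const_mul (s n j)
  have h2 : HasFDerivAt (fun w : EuclideanSpace ℝ (Fin d) =>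
        Real.log (∑ k, Real.exp (⟪w, v k⟫ / τ)))
      ((∑ k, Real.exp (⟪u n, v k⟫ / τ))⁻¹ •
        ∑ k, Real.exp (⟪u n, v k⟫ / τ) • τ⁻¹ • (innerSL ℝ (v k))) (u n) :=
    (HasFDerivAt.fun_sum fun k _ => (hA k).exp).log (ne_of_gt (hexppos _))
  have h3 : ∀ j : Fin m, HasFDerivAt (fun w : EuclideanSpace ℝ (Fin d) =>
        Real.log (Real.exp (⟪w, v j⟫ / τ)
          + ∑ k ∈ Finset.univ.erase n, Real.exp (⟪u k, v j⟫ / τ)))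
      ((Real.exp (⟪u n, v j⟫ / τ)
          + ∑ k ∈ Finset.univ.erase n, Real.exp (⟪u k, v j⟫ / τ))⁻¹ •
        Real.exp (⟪u n, v j⟫ / τ) • τ⁻¹ • (innerSL ℝ (v j))) (u n) := by
    intro j
    have hpos : (0:ℝ) < Real.exp (⟪u n, v j⟫ / τ)
        + ∑ k ∈ Finset.univ.erase n, Real.exp (⟪u k, v j⟫ / τ) := by
      have : (0:ℝ) ≤ ∑ k ∈ Finset.univ.erase n, Real.exp (⟪u k, v j⟫ / τ) :=
        Finset.sum_nonneg fun k _ => (Real.exp_pos _).le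
      linarith [Real.exp_pos (⟪u n, v j⟫ / τ)]
    exact (((hA j).exp).add_const _).log (ne_of_gt hpos)
  have H := ((((h1.fun_sub (h2.const_mul (∑ j, s n j))).fun_sub
      (HasFDerivAt.fun_sum fun j (_ : j ∈ Finset.univ) => (h3 j).const_mul (∑ i, s i j))).const_mul
      (-(1 / (m:ℝ)))).const_add
      (-(1 / (m : ℝ)) * ∑ i ∈ Finset.univ.erase n, ∑ j,
        (s i j * (2 * (⟪u i, v j⟫ / τ))
          - s i j * Real.log (∑ k, Real.exp (⟪u i, v k⟫ / τ)))))
  refine H.congr_fderiv ?_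
  -- linear map identity
  apply ContinuousLinearMap.ext
  intro y
  have hTR : ∀ j : Fin m, Real.exp (⟪u n, v j⟫ / τ)
      + ∑ k ∈ Finset.univ.erase n, Real.exp (⟪u k, v j⟫ / τ)
      = ∑ k, Real.exp (⟪u k, v j⟫ / τ) :=
    fun j => Finset.add_sum_erase _ (fun k => Real.exp (⟪u k, v j⟫ / τ)) (Finset.mem_univ n)
  simp only [ContinuousLinearMap.smul_apply, ContinuousLinearMap.sub_apply,
    ContinuousLinearMap.sum_apply, innerSL_apply_apply, smul_eq_mul,
    InnerProductSpace.toDual_apply_apply, hTR]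
  rw [sum_inner]
  simp only [real_inner_smul_left]
  have hS0 : (∑ k, Real.exp (⟪u n, v k⟫ / τ)) ≠ 0 := ne_of_gt (hexppos _)
  have hT0 : ∀ j : Fin m, (∑ k, Real.exp (⟪u k, v j⟫ / τ)) ≠ 0 :=
    fun j => ne_of_gt (hexppos _)
  have hB : (∑ j, s n j) * ((∑ k, Real.exp (⟪u n, v k⟫ / τ))⁻¹ *
        ∑ x, Real.exp (⟪u n, v x⟫ / τ) * (τ⁻¹ * ⟪v x, y⟫))
      = ∑ x, (∑ j, s n j) * ((∑ k, Real.exp (⟪u n, v k⟫ / τ))⁻¹ *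
          (Real.exp (⟪u n, v x⟫ / τ) * (τ⁻¹ * ⟪v x, y⟫))) := by
    rw [Finset.mul_sum, Finset.mul_sum]
  rw [hB, ← Finset.sum_sub_distrib, ← Finset.sum_sub_distrib, Finset.mul_sum]
  refine Finset.sum_congr rfl fun j _ => ?_
  field_simp
  ring
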